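/- For integers n ≥ 2 and r ≥ 0 with 2r ≤ n+1, the following identity holds in ℤ[q]: ∑_{λ} binom(k(λ), r) · q^{|λ|} = q^{r²−r+n+1} · [n−1 choose r]_{q²} · [2n−2r−1 choose n−2]_q, where the sum is over all partitions λ with exactly n+1 parts, each part at most n−1, and k(λ) denotes the number of distinct part-values occurring at least twice in λ. -/

import Mathlib

open Polynomial

/-- The q-integer `[n]_q = 1 + q + ⋯ + q^{n−1}` as a polynomial in `ℤ[q]`
(with `[0]_q = 0`). -/
noncomputable def qIntP (n : ℕ) : Polynomial ℤ := ∑ i ∈ Finset.range n, Polynomial.X ^ i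

/-- The q-factorial `[n]_q! = [1]_q[2]_q⋯[n]_q` in `ℤ[q]`. -/
noncomputable def qFactP (n : ℕ) : Polynomial ℤ := ∏ i ∈ Finset.range n, qIntP (i + 1)

/-- The Gaussian binomial coefficient `[m choose k]_q = [m]_q!/([k]_q![m−k]_q!)`
as a polynomial in `ℤ[q]` (the division, by a monic polynomial, is exact),
and `0` if `k > m`. -/
noncomputable def qBinomP (m k : ℕ) : Polynomial ℤ :=
  if k ≤ m then qFactP m /ₘ (qFactP k * qFactP (m - k)) else 0

/-- The Gaussian binomial coefficient `[m choose k]_{q²}`, i.e. `[m choose k]_q`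
with `q` replaced by `q²`. -/
noncomputable def qBinomP2 (m k : ℕ) : Polynomial ℤ := (qBinomP m k).comp (Polynomial.X ^ 2)

/-- `kRep λ` is the number of distinct values occurring at least twice in the
multiset `λ` (the number of different parts with repetition of a partition). -/
def kRep (lam : Multiset ℕ) : ℕ :=
  (lam.toFinset.filter fun v => 2 ≤ lam.count v).card

open Finset

noncomputable def gaussP : ℕ → ℕ → Polynomial ℤ
  | _, 0 => 1
  | 0, _+1 => 0
  | m+1, k+1 => gaussP m k + X^(k+1) * gaussP m (k+1)

@[simp] lemma gaussP_zero_right (m : ℕ) : gaussP m 0 = 1 := by cases m <;> rfl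

lemma gaussP_succ_succ (m k : ℕ) :
    gaussP (m+1) (k+1) = gaussP m k + X^(k+1) * gaussP m (k+1) := rfl

lemma gaussP_eq_zero : ∀ {m k : ℕ}, m < k → gaussP m k = 0
  | 0, _+1, _ => rfl
  | m+1, k+1, h => by
    rw [gaussP_succ_succ, gaussP_eq_zero (by omega), gaussP_eq_zero (by omega)]
    ring

@[simp] lemma gaussP_self : ∀ m : ℕ, gaussP m m = 1
  | 0 => rfl
  | m+1 => by
    rw [gaussP_succ_succ, gaussP_self m, gaussP_eq_zero (by omega)]; ring

lemma degree_qIntP_lt (n : ℕ) : (qIntP n).degree < (n : WithBot ℕ) := by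
  apply lt_of_le_of_lt (degree_sum_le _ _)
  refine Finset.sup_lt_iff (WithBot.bot_lt_coe n) |>.mpr fun i hi => ?_
  exact lt_of_le_of_lt (degree_X_pow_le i) (by simpa [Nat.cast_withBot, WithBot.coe_lt_coe] using Finset.mem_range.mp hi)

lemma qIntP_succ (n : ℕ) : qIntP (n+1) = X^n + qIntP n := by
  rw [qIntP, qIntP, Finset.sum_range_succ]; ring

lemma qIntP_monic (n : ℕ) : (qIntP (n+1)).Monic := by
  rw [qIntP_succ]
  exact monic_X_pow_add (degree_qIntP_lt n)

lemma qFactP_monic (n : ℕ) : (qFactP n).Monic :=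
  monic_prod_of_monic _ _ fun i _ => qIntP_monic i

lemma qIntP_split {m k : ℕ} (h : k ≤ m) :
    qIntP (m+1) = qIntP (k+1) + X^(k+1) * qIntP (m-k) := by
  have hm : m + 1 = (k+1) + (m-k) := by omega
  rw [qIntP, qIntP, qIntP, hm, Finset.sum_range_add, Finset.mul_sum]
  congr 1
  exact Finset.sum_congr rfl fun i _ => by rw [← pow_add]

lemma qFactP_succ (n : ℕ) : qFactP (n+1) = qFactP n * qIntP (n+1) := by
  rw [qFactP, qFactP, Finset.prod_range_succ]

lemma gaussP_mul_fact : ∀ m, ∀ k ≤ m, gaussP m k * (qFactP k * qFactP (m-k)) = qFactP m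
  | 0, 0, _ => by simp [qFactP]
  | m+1, 0, _ => by simp [qFactP]
  | m+1, k+1, h => by
    rcases eq_or_lt_of_le h with h1 | h1
    · rcases Nat.succ_injective h1 with rfl
      simp [qFactP]
    · have hk : k ≤ m := by omega
      have hk1 : k + 1 ≤ m := by omega
      rw [gaussP_succ_succ, add_mul]
      have e1 : gaussP m k * (qFactP (k+1) * qFactP (m+1-(k+1))) =
          qFactP m * qIntP (k+1) := by
        rw [qFactP_succ k]
        have : m + 1 - (k+1) = m - k := by omega
        rw [this, ← gaussP_mul_fact m k hk]; ring
      have e2 : X^(k+1) * gaussP m (k+1) * (qFactP (k+1) * qFactP (m+1-(k+1))) =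
          qFactP m * (X^(k+1) * qIntP (m-k)) := by
        have h2 : m + 1 - (k+1) = (m - (k+1)) + 1 := by omega
        rw [h2, qFactP_succ (m-(k+1))]
        have h3 : m - (k+1) + 1 = m - k := by omega
        rw [h3, ← gaussP_mul_fact m (k+1) hk1]; ring
      rw [e1, e2, ← mul_add, ← qIntP_split hk, ← qFactP_succ]

lemma qBinomP_eq_gaussP (m k : ℕ) : qBinomP m k = gaussP m k := by
  rcases le_or_gt k m with h | h
  · rw [qBinomP, if_pos h, ← gaussP_mul_fact m k h, mul_comm,
      mul_divByMonic_cancel_left _ ((qFactP_monic k).mul (qFactP_monic (m-k)))]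
  · rw [qBinomP, if_neg (by omega), gaussP_eq_zero h]

lemma qFactP_ne_zero (n : ℕ) : qFactP n ≠ 0 := (qFactP_monic n).ne_zero

lemma gaussP_symm {m k : ℕ} (h : k ≤ m) : gaussP m k = gaussP m (m-k) := by
  have h2 : m - k ≤ m := by omega
  have := gaussP_mul_fact m k h
  rw [← gaussP_mul_fact m (m-k) h2] at this
  have h3 : m - (m-k) = k := by omega
  rw [h3] at this
  have hne : qFactP k * qFactP (m-k) ≠ 0 :=
    mul_ne_zero (qFactP_ne_zero _) (qFactP_ne_zero _)
  apply mul_right_cancel₀ hne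
  rw [this]; ring

lemma gaussP_one (m : ℕ) : gaussP m 1 = qIntP m := by
  induction m with
  | zero => rfl
  | succ m ih =>
    rw [gaussP_succ_succ, ih, gaussP_zero_right, qIntP, qIntP,
      Finset.sum_range_succ' (fun i => (X:Polynomial ℤ)^i), Finset.mul_sum]
    simp [pow_succ, add_comm, mul_comm]

lemma gaussP_pascal' : ∀ m, ∀ k, k ≤ m →
    gaussP (m+1) (k+1) = X^(m-k) * gaussP m k + gaussP m (k+1) := by
  intro m
  induction m with
  | zero =>
    intro k hk
    interval_cases k
    simp [gaussP_succ_succ, gaussP_eq_zero (show 0 < 1 by omega)]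
  | succ m ih =>
    intro k hk
    rcases eq_or_lt_of_le hk with rfl | hlt
    · rw [gaussP_self, gaussP_self, gaussP_eq_zero (Nat.lt_succ_self _)]
      simp
    · cases k with
      | zero =>
        rw [gaussP_one, gaussP_one, Nat.sub_zero, gaussP_zero_right, mul_one,
          qIntP_succ]
      | succ k =>
        have hk' : k + 1 ≤ m := by omega
        have hk'' : k ≤ m := by omega
        have e1 : m + 1 - (k+1) = m - k := by omega
        have e3 : (X:Polynomial ℤ)^(k+1+1) * X^(m-(k+1)) = X^(m+1) := by
          rw [← pow_add]; congr 1; omega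
        have e4 : (X:Polynomial ℤ)^(m-k) * X^(k+1) = X^(m+1) := by
          rw [← pow_add]; congr 1; omega
        calc gaussP (m+1+1) (k+1+1)
            = (X^(m-k) * gaussP m k + gaussP m (k+1)) +
              X^(k+1+1) * (X^(m-(k+1)) * gaussP m (k+1) + gaussP m (k+2)) := by
              rw [gaussP_succ_succ, ih k hk'', ih (k+1) hk']
          _ = X^(m+1-(k+1)) * (gaussP m k + X^(k+1) * gaussP m (k+1)) +
              (gaussP m (k+1) + X^(k+1+1) * gaussP m (k+2)) := by
              rw [e1]
              linear_combination (gaussP m (k+1)) * e3 - (gaussP m (k+1)) * e4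
          _ = X^(m+1-(k+1)) * gaussP (m+1) (k+1) + gaussP (m+1) (k+2) := by
              rw [gaussP_succ_succ, gaussP_succ_succ]

open Finset in
lemma sym_sum_split {α M : Type*} [DecidableEq α] [AddCommMonoid M] {a : α} {s : Finset α}
    (ha : a ∉ s) (m : ℕ) (f : Sym α (m+1) → M) :
    ∑ k ∈ (insert a s).sym (m+1), f k =
      (∑ k ∈ (insert a s).sym m, f (a ::ₛ k)) + ∑ k ∈ s.sym (m+1), f k := by
  have hU : (insert a s).sym (m+1) =
      ((insert a s).sym m).image (Sym.cons a) ∪ s.sym (m+1) := by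
    ext k
    simp only [Finset.mem_union, Finset.mem_image, Finset.mem_sym_iff, Finset.mem_insert]
    constructor
    · intro h
      by_cases hak : a ∈ k
      · refine Or.inl ⟨k.erase a hak, fun b hb => ?_, Sym.cons_erase hak⟩
        have hb' : b ∈ k := by
          have : b ∈ (k : Multiset α).erase a := hb
          exact Multiset.mem_of_mem_erase this
        exact h b hb'
      · refine Or.inr fun b hb => (h b hb).resolve_left ?_
        rintro rfl; exact hak hb
    · rintro (⟨k', hk', rfl⟩ | h)
      · intro b hb
        rcases Sym.mem_cons.mp hb with rfl | hb
        · exact Or.inl rfl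
        · exact hk' b hb
      · exact fun b hb => Or.inr (h b hb)
  have hdisj : Disjoint (((insert a s).sym m).image (Sym.cons a)) (s.sym (m+1)) := by
    rw [Finset.disjoint_left]
    rintro k hk hk2
    rcases Finset.mem_image.mp hk with ⟨k', _, rfl⟩
    exact ha (Finset.mem_sym_iff.mp hk2 a (Sym.mem_cons_self a k'))
  rw [hU, Finset.sum_union hdisj,
    Finset.sum_image (fun x _ y _ h => (Sym.cons_inj_right a x y).mp h)]

lemma icc_succ_insert (N : ℕ) :
    Finset.Icc 1 (N+1) = insert (N+1) (Finset.Icc 1 N) := by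
  ext x
  simp only [Finset.mem_Icc, Finset.mem_insert]
  omega

lemma symSumI_eq : ∀ N, ∀ m, (∑ k ∈ (Finset.Icc 1 (N+1)).sym m,
      (X:Polynomial ℤ) ^ (k : Multiset ℕ).sum) = X^m * gaussP (m+N) m := by
  intro N
  induction N with
  | zero =>
    intro m
    have h1 : Finset.Icc 1 1 = ({1} : Finset ℕ) := rfl
    rw [h1, Finset.sym_singleton, Finset.sum_singleton]
    have h2 : ((Sym.replicate m 1 : Sym ℕ m) : Multiset ℕ).sum = m := by
      rw [Sym.coe_replicate, Multiset.sum_replicate, smul_eq_mul, mul_one]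
    rw [h2, Nat.add_zero, gaussP_self, mul_one]
  | succ N ihN =>
    intro m
    induction m with
    | zero =>
      rw [Finset.sym_zero, Finset.sum_singleton]
      have h0 : (((∅ : Sym ℕ 0)) : Multiset ℕ).sum = 0 := rfl
      rw [h0, gaussP_zero_right]
      simp
    | succ m ihm =>
      have hnm : (N+1+1 : ℕ) ∉ Finset.Icc 1 (N+1) := by
        simp only [Finset.mem_Icc]; omega
      rw [icc_succ_insert (N+1), sym_sum_split hnm m, ← icc_succ_insert (N+1)]
      have h2 : ∀ k : Sym ℕ m,
          (X:Polynomial ℤ) ^ (((N+1+1) ::ₛ k : Sym ℕ (m+1)) : Multiset ℕ).sum =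
          X^(N+1+1) * X^(k : Multiset ℕ).sum := by
        intro k
        rw [Sym.coe_cons, Multiset.sum_cons, pow_add]
      simp only [h2]
      rw [← Finset.mul_sum, ihm, ihN (m+1)]
      have hp := gaussP_pascal' (m + N + 1) m (by omega)
      have e1 : m + N + 1 - m = N + 1 := by omega
      rw [e1] at hp
      have e2 : m + 1 + (N + 1) = m + N + 1 + 1 := by omega
      have e3 : m + 1 + N = m + N + 1 := by omega
      rw [e2, e3, hp]
      ring

lemma powSum2I_eq : ∀ N, ∀ r, (∑ T ∈ (Finset.Icc 1 N).powersetCard r,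
      (X:Polynomial ℤ) ^ (2 * ∑ t ∈ T, t)) =
      X^(r*(r+1)) * (gaussP N r).comp (X^2) := by
  intro N
  induction N with
  | zero =>
    intro r
    cases r with
    | zero => simp
    | succ r =>
      have h0 : Finset.Icc 1 0 = (∅ : Finset ℕ) := rfl
      rw [h0, gaussP_eq_zero (by omega),
        show Finset.powersetCard (r+1) (∅:Finset ℕ) = ∅ from
          Finset.powersetCard_eq_empty.mpr (by simp)]
      simp
  | succ N ihN =>
    intro r
    cases r with
    | zero => simp
    | succ r =>
      have hnm : (N+1 : ℕ) ∉ Finset.Icc 1 N := by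
        simp only [Finset.mem_Icc]; omega
      rw [icc_succ_insert N, Finset.powersetCard_succ_insert hnm]
      have hdisj : Disjoint ((Finset.Icc 1 N).powersetCard (r+1))
          (((Finset.Icc 1 N).powersetCard r).image (insert (N+1))) := by
        rw [Finset.disjoint_right]
        rintro T hT hT2
        rcases Finset.mem_image.mp hT with ⟨T', hT', rfl⟩
        have := (Finset.mem_powersetCard.mp hT2).1 (Finset.mem_insert_self (N+1) T')
        simp only [Finset.mem_Icc] at this; omega
      rw [Finset.sum_union hdisj]
      have hinj : ∀ x ∈ (Finset.Icc 1 N).powersetCard r,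
          ∀ y ∈ (Finset.Icc 1 N).powersetCard r,
          insert (N+1) x = insert (N+1) y → x = y := by
        intro x hx y hy hxy
        have hx' : (N+1) ∉ x := fun h => by
          have := (Finset.mem_powersetCard.mp hx).1 h
          simp only [Finset.mem_Icc] at this; omega
        have hy' : (N+1) ∉ y := fun h => by
          have := (Finset.mem_powersetCard.mp hy).1 h
          simp only [Finset.mem_Icc] at this; omega
        rw [← Finset.erase_insert hx', ← Finset.erase_insert hy', hxy]
      rw [Finset.sum_image hinj]
      have h2 : ∀ T ∈ (Finset.Icc 1 N).powersetCard r,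
          (X:Polynomial ℤ) ^ (2 * ∑ t ∈ insert (N+1) T, t) =
          X^(2*(N+1)) * X^(2 * ∑ t ∈ T, t) := by
        intro T hT
        have hx' : (N+1) ∉ T := fun h => by
          have := (Finset.mem_powersetCard.mp hT).1 h
          simp only [Finset.mem_Icc] at this; omega
        rw [Finset.sum_insert hx', ← pow_add]
        congr 1
        ring
      rw [Finset.sum_congr rfl h2, ← Finset.mul_sum, ihN r, ihN (r+1)]
      rcases le_or_gt (r+1) (N+1) with h | h
      · have hp := gaussP_pascal' N r (by omega)
        rw [hp, add_comp, mul_comp, X_pow_comp]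
        have e4 : ((X:Polynomial ℤ)^2)^(N-r) = X^(2*(N-r)) := by
          rw [← pow_mul]
        rw [e4]
        have e5 : (X:Polynomial ℤ)^(2*(N+1)) * (X^(r*(r+1)) *
            ((gaussP N r).comp (X^2))) =
            X^((r+1)*(r+1+1)) * (X^(2*(N-r)) * (gaussP N r).comp (X^2)) := by
          rw [← mul_assoc, ← mul_assoc, ← pow_add, ← pow_add]
          congr 2
          have : r ≤ N := by omega
          nlinarith [Nat.sub_add_cancel this]
        rw [e5]
        ring
      · have hz1 : gaussP (N+1) (r+1) = 0 := gaussP_eq_zero (by omega)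
        have hz2 : gaussP N (r+1) = 0 := gaussP_eq_zero (by omega)
        have hz3 : gaussP N r = 0 := gaussP_eq_zero (by omega)
        rw [hz1, hz2, hz3]
        simp

/-- For `n ≥ 2`, `r ≥ 0` with `2r ≤ n+1`, in `ℤ[q]`:
`∑_λ binom(k(λ), r)·q^{|λ|} = q^{r²−r+n+1}·[n−1 choose r]_{q²}·[2n−2r−1 choose n−2]_q`,
where the sum runs over all partitions `λ` with exactly `n+1` parts, each part
in `{1, …, n−1}` (encoded as multisets of fixed cardinality `n+1`), and `k(λ)`
is the number of distinct part-values occurring at least twice in `λ`. -/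
theorem partition_sum_eq (n r : ℕ) (hn : 2 ≤ n) (hr : 2 * r ≤ n + 1) :
    ∑ lam ∈ Finset.sym (Finset.Icc 1 (n - 1)) (n + 1),
        (((kRep (lam : Multiset ℕ)).choose r : ℤ) : Polynomial ℤ) *
          Polynomial.X ^ (lam : Multiset ℕ).sum =
      Polynomial.X ^ (r ^ 2 - r + n + 1) * qBinomP2 (n - 1) r *
        qBinomP (2 * n - 2 * r - 1) (n - 2) := by
  classical
  set I : Finset ℕ := Finset.Icc 1 (n - 1) with hI
  set F : Sym ℕ (n+1) → Finset ℕ := fun lam =>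
    (lam : Multiset ℕ).toFinset.filter fun v => 2 ≤ (lam : Multiset ℕ).count v with hF
  -- Step 1: expand the binomial coefficient as a sum over r-subsets
  have step1 : ∀ lam : Sym ℕ (n+1),
      (((kRep (lam : Multiset ℕ)).choose r : ℤ) : Polynomial ℤ) *
        X ^ (lam : Multiset ℕ).sum =
      ∑ _T ∈ (F lam).powersetCard r, X ^ (lam : Multiset ℕ).sum := by
    intro lam
    rw [Finset.sum_const, nsmul_eq_mul, Finset.card_powersetCard]
    norm_cast
  -- Step 2: replace the powersetCard of F lam by a filter over subsets of I
  have step2 : ∀ lam ∈ Finset.sym I (n+1),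
      (F lam).powersetCard r =
        (I.powersetCard r).filter fun T => T ⊆ F lam := by
    intro lam hlam
    have hFsub : F lam ⊆ I := by
      intro v hv
      have hv' : v ∈ (lam : Multiset ℕ) :=
        Multiset.mem_toFinset.mp (Finset.mem_filter.mp hv).1
      exact Finset.mem_sym_iff.mp hlam v hv'
    ext T
    simp only [Finset.mem_powersetCard, Finset.mem_filter]
    constructor
    · exact fun h => ⟨⟨h.1.trans hFsub, h.2⟩, h.1⟩
    · exact fun h => ⟨h.2, h.1.2⟩
  rw [Finset.sum_congr rfl fun lam _ => step1 lam,
    Finset.sum_congr rfl fun lam hlam => by rw [step2 lam hlam]]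
  simp only [Finset.sum_filter]
  rw [Finset.sum_comm]
  simp only [← Finset.sum_filter]
  -- Step 3: for a fixed T, strip two copies of each element of T
  have key : ∀ T ∈ I.powersetCard r,
      ∑ lam ∈ (Finset.sym I (n+1)).filter (fun lam => T ⊆ F lam),
          (X:Polynomial ℤ) ^ (lam : Multiset ℕ).sum =
      X ^ (2 * ∑ t ∈ T, t) *
        ∑ mu ∈ Finset.sym I (n+1-2*r), (X:Polynomial ℤ) ^ (mu : Multiset ℕ).sum := by
    intro T hT
    obtain ⟨hTI, hTcard⟩ := Finset.mem_powersetCard.mp hT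
    set D : Multiset ℕ := T.val + T.val with hD
    have hDcard : Multiset.card D = 2 * r := by
      rw [hD, Multiset.card_add]
      have : Multiset.card T.val = r := hTcard
      omega
    have hDsum : D.sum = 2 * ∑ t ∈ T, t := by
      rw [hD, Multiset.sum_add]
      have : ∑ t ∈ T, t = T.val.sum := by
        rw [Finset.sum_eq_multiset_sum, Multiset.map_id']
      omega
    have hcountD : ∀ a : ℕ, Multiset.count a D = if a ∈ T then 2 else 0 := by
      intro a
      rw [hD, Multiset.count_add]
      by_cases ha : a ∈ T
      · rw [Multiset.count_eq_one_of_mem T.nodup ha, if_pos ha]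
      · rw [Multiset.count_eq_zero_of_notMem ha, if_neg ha]
    have hDle : ∀ lam : Sym ℕ (n+1), T ⊆ F lam → D ≤ (lam : Multiset ℕ) := by
      intro lam hTF
      rw [Multiset.le_iff_count]
      intro a
      rw [hcountD a]
      by_cases ha : a ∈ T
      · rw [if_pos ha]
        exact (Finset.mem_filter.mp (hTF ha)).2
      · rw [if_neg ha]
        omega
    rw [Finset.mul_sum]
    refine Finset.sum_bij'
      (fun lam _ => (⟨(lam : Multiset ℕ) - D, ?_⟩ : Sym ℕ (n+1-2*r)))
      (fun mu _ => (⟨(mu : Multiset ℕ) + D, ?_⟩ : Sym ℕ (n+1)))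
      ?_ ?_ ?_ ?_ ?_
    · rename_i hlam
      rw [Finset.mem_filter] at hlam
      rw [Multiset.card_sub (hDle lam hlam.2), hDcard,
        show Multiset.card (lam : Multiset ℕ) = n+1 from lam.2]
    · rename_i hmu
      rw [Multiset.card_add, hDcard,
        show Multiset.card (mu : Multiset ℕ) = n+1-2*r from mu.2]
      omega
    · rintro lam hlam
      rw [Finset.mem_filter] at hlam
      refine Finset.mem_sym_iff.mpr ?_
      intro a ha
      have ha' : a ∈ (lam : Multiset ℕ) :=
        Multiset.mem_of_le (Multiset.sub_le_self _ _) ha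
      exact Finset.mem_sym_iff.mp hlam.1 a ha'
    · rintro mu hmu
      refine Finset.mem_filter.mpr ?_
      constructor
      · refine Finset.mem_sym_iff.mpr ?_
        intro a ha
        rcases Multiset.mem_add.mp ha with ha | ha
        · exact Finset.mem_sym_iff.mp hmu a ha
        · rcases Multiset.mem_add.mp ha with ha | ha <;> exact hTI ha
      · intro a haT
        have haD : a ∈ D := by
          rw [hD, Multiset.mem_add]
          exact Or.inl haT
        rw [hF]
        simp only [Finset.mem_filter, Multiset.mem_toFinset]
        constructor
        · exact Multiset.mem_add.mpr (Or.inr haD)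
        · show 2 ≤ Multiset.count a ((mu : Multiset ℕ) + D)
          rw [Multiset.count_add, hcountD a, if_pos haT]
          omega
    · rintro lam hlam
      rw [Finset.mem_filter] at hlam
      apply Sym.coe_injective
      show ((lam : Multiset ℕ) - D) + D = (lam : Multiset ℕ)
      exact tsub_add_cancel_of_le (hDle lam hlam.2)
    · rintro mu _
      apply Sym.coe_injective
      show ((mu : Multiset ℕ) + D) - D = (mu : Multiset ℕ)
      exact add_tsub_cancel_right _ _
    · rintro lam hlam
      rw [Finset.mem_filter] at hlam
      have hle := hDle lam hlam.2
      show (X:Polynomial ℤ) ^ (lam : Multiset ℕ).sum =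
        X ^ (2 * ∑ t ∈ T, t) * X ^ ((lam : Multiset ℕ) - D).sum
      rw [← pow_add]
      congr 1
      have hsplit : ((lam : Multiset ℕ) - D) + D = (lam : Multiset ℕ) :=
        tsub_add_cancel_of_le hle
      have := congrArg Multiset.sum hsplit
      rw [Multiset.sum_add] at this
      omega
  rw [Finset.sum_congr rfl key, ← Finset.sum_mul]
  -- Step 4: evaluate both factors
  obtain ⟨N, rfl⟩ : ∃ N, n = N + 2 := ⟨n - 2, by omega⟩
  have hNr : N + 2 - 1 = N + 1 := by omega
  simp only [hI, hNr]
  rw [powSum2I_eq (N+1) r, symSumI_eq N (N+2+1-2*r)]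
  have e1 : N + 2 + 1 - 2*r + N = 2*(N+2) - 2*r - 1 := by omega
  rw [e1]
  have e2 : gaussP (2*(N+2) - 2*r - 1) (N+2+1-2*r) =
      gaussP (2*(N+2) - 2*r - 1) (N+2-2) := by
    rw [gaussP_symm (show N+2+1-2*r ≤ 2*(N+2)-2*r-1 by omega)]
    congr 1
    omega
  rw [e2, qBinomP2, qBinomP_eq_gaussP, qBinomP_eq_gaussP]
  have e3 : r * (r + 1) + (N + 2 + 1 - 2*r) = r^2 - r + (N+2) + 1 := by
    have h2 : r ≤ r^2 := Nat.le_self_pow two_ne_zero r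
    zify [show 2*r ≤ N+2+1 by omega, h2]
    ring
  have final : ∀ (C G : Polynomial ℤ) (a b c : ℕ), a + b = c →
      (X:Polynomial ℤ)^a * C * (X^b * G) = X^c * C * G := by
    intro C G a b c h
    subst h
    rw [pow_add]
    ring
  exact final _ _ _ _ _ e3
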